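/- arXiv:2602.04647 — 8 statements merged into one kernel-verified Lean document; each statement's English description precedes it below -/
import Mathlib

section
/- Let G be a topological group that is a κ-Fréchet–Urysohn space. Then for every sequence (U_n) of open subsets of G such that the identity e lies in the closure of each U_n, there exist a strictly increasing sequence (n_k) of natural numbers and a sequence (x_k) in G such that x_k ∈ U_{n_k} for every k and x_k → e. -/
open Filter Topology

def KappaFrechetUrysohn (X : Type*) [TopologicalSpace X] : Prop :=
  ∀ U : Set X, IsOpen U → ∀ x ∈ closure U,
    ∃ u : ℕ → X, (∀ n, u n ∈ U) ∧ Tendsto u atTop (𝓝 x)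

theorem stmt0 {G : Type*} [Group G] [TopologicalSpace G] [IsTopologicalGroup G]
    (hkFU : KappaFrechetUrysohn G)
    (U : ℕ → Set G) (hopen : ∀ n, IsOpen (U n)) (hcl : ∀ n, (1 : G) ∈ closure (U n)) :
    ∃ (nk : ℕ → ℕ) (x : ℕ → G), StrictMono nk ∧ (∀ k, x k ∈ U (nk k)) ∧
      Tendsto x atTop (𝓝 1) := by
  by_cases h1 : closure ({1} : Set G) ∈ 𝓝 (1 : G)
  · -- Case 1: closure {1} is a neighborhood of 1.
    have hint : (1 : G) ∈ interior (closure ({1} : Set G)) :=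
      mem_interior_iff_mem_nhds.2 h1
    have hx : ∀ n, ∃ x, x ∈ U n ∧ x ∈ closure ({1} : Set G) := by
      intro n
      obtain ⟨x, hx1, hx2⟩ := mem_closure_iff.1 (hcl n) _ isOpen_interior hint
      exact ⟨x, hx2, interior_subset hx1⟩
    choose x hxU hxcl using hx
    refine ⟨id, x, strictMono_id, hxU, ?_⟩
    rw [tendsto_def]
    intro V hV
    refine Filter.univ_mem' fun n => ?_
    have hspec : x n ⤳ 1 := (specializes_iff_mem_closure.2 (hxcl n)).symm
    exact specializes_iff_pure.1 hspec hV
  · -- Case 2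
    have hmem : (1 : G) ∈ closure ((closure ({1} : Set G))ᶜ) := by
      rw [closure_compl]
      simpa [mem_interior_iff_mem_nhds] using h1
    obtain ⟨s, hsmem, hs⟩ :=
      hkFU _ (isOpen_compl_iff.2 isClosed_closure) 1 hmem
    -- find small neighborhoods V n with s n ∉ closure (V n)
    have hV : ∀ n, ∃ V : Set G, IsOpen V ∧ (1 : G) ∈ V ∧ s n ∉ closure V := by
      intro n
      by_contra hcon
      push_neg at hcon
      have hle : pure (s n) ≤ 𝓝 (1 : G) := by
        intro W hW
        obtain ⟨C, ⟨hC𝓝, hCcl⟩, hCW⟩ := (closed_nhds_basis (1 : G)).mem_iff.1 hW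
        obtain ⟨O, hOC, hOopen, hO1⟩ := mem_nhds_iff.1 hC𝓝
        have : s n ∈ closure O := hcon O hOopen hO1
        have : s n ∈ C := by
          have := (closure_mono hOC).trans_eq hCcl.closure_eq this
          exact this
        exact mem_pure.2 (hCW this)
      have : s n ∈ closure ({1} : Set G) :=
        specializes_iff_mem_closure.1 (specializes_iff_pure.2 hle).symm
      exact hsmem n this
    choose V hVopen hV1 hVs using hV
    set A : ℕ → Set G := fun n => U n ∩ V n with hA
    have hAopen : ∀ n, IsOpen (A n) := fun n => (hopen n).inter (hVopen n)
    have hAcl : ∀ n, (1 : G) ∈ closure (A n) := by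
      intro n
      rw [mem_closure_iff]
      intro o ho h1o
      obtain ⟨z, hz1, hz2⟩ :=
        mem_closure_iff.1 (hcl n) (o ∩ V n) (ho.inter (hVopen n)) ⟨h1o, hV1 n⟩
      exact ⟨z, hz1.1, hz2, hz1.2⟩
    set P : ℕ → Set G := fun n => (fun y => s n * y) ⁻¹' (A n) with hP
    have hPeq : ∀ n, closure (P n) = (fun y => s n * y) ⁻¹' (closure (A n)) := by
      intro n
      exact ((Homeomorph.mulLeft (s n)).preimage_closure (A n)).symm
    set Ω : Set G := ⋃ n, P n with hΩ
    have hΩopen : IsOpen Ω :=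
      isOpen_iUnion fun n => (hAopen n).preimage (continuous_const.mul continuous_id)
    have hsinv : ∀ n, (s n)⁻¹ ∈ closure Ω := by
      intro n
      have h1 : (s n)⁻¹ ∈ closure (P n) := by
        rw [hPeq]
        show s n * (s n)⁻¹ ∈ closure (A n)
        rw [mul_inv_cancel]
        exact hAcl n
      exact closure_mono (Set.subset_iUnion P n) h1
    have hΩcl : (1 : G) ∈ closure Ω := by
      have htend : Tendsto (fun n => (s n)⁻¹) atTop (𝓝 (1 : G)) := by
        simpa using hs.inv
      have := mem_closure_of_tendsto (s := closure Ω) htend (Filter.univ_mem' hsinv)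
      rwa [closure_closure] at this
    obtain ⟨y, hyΩ, hy⟩ := hkFU Ω hΩopen 1 hΩcl
    have hym : ∀ k, ∃ n, s n * y k ∈ A n := fun k => Set.mem_iUnion.1 (hyΩ k)
    choose m hm using hym
    -- indices go to infinity
    have hfib : ∀ j, ∀ᶠ k in atTop, m k ≠ j := by
      intro j
      by_contra hcon
      rw [Filter.not_eventually] at hcon
      have hfreq : ∃ᶠ k in atTop, y k ∈ P j := by
        refine hcon.mono fun k hk => ?_
        push_neg at hk
        show s j * y k ∈ A j
        rw [← hk]
        exact hm k
      have h1P : (1 : G) ∈ closure (P j) := mem_closure_of_frequently_of_tendsto hfreq hy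
      rw [hPeq] at h1P
      have : s j ∈ closure (A j) := by simpa using h1P
      exact hVs j (closure_mono Set.inter_subset_right this)
    have htendm : Tendsto m atTop atTop := by
      rw [tendsto_atTop]
      intro b
      have hall : ∀ᶠ k in atTop, ∀ j ∈ Finset.range b, m k ≠ j :=
        (eventually_all_finset _).2 fun j _ => hfib j
      refine hall.mono fun k hk => ?_
      by_contra hlt
      push_neg at hlt
      exact hk (m k) (Finset.mem_range.2 hlt) rfl
    set x' : ℕ → G := fun k => s (m k) * y k with hx'
    have hx'U : ∀ k, x' k ∈ U (m k) := fun k => (hm k).1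
    have hx'tend : Tendsto x' atTop (𝓝 (1 : G)) := by
      have := (hs.comp htendm).mul hy
      simpa using this
    have H : ∀ p : ℕ, ∃ q, p < q ∧ m p < m q := by
      intro p
      exact ((eventually_gt_atTop p).and (htendm.eventually_gt_atTop (m p))).exists
    set φ : ℕ → ℕ := fun k => Nat.rec 0 (fun _ prev => (H prev).choose) k with hφdef
    have hφsucc : ∀ k, φ (k + 1) = (H (φ k)).choose := fun k => rfl
    have hφ : StrictMono φ :=
      strictMono_nat_of_lt_succ fun k => by rw [hφsucc]; exact (H (φ k)).choose_spec.1
    have hmφ : StrictMono (m ∘ φ) :=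
      strictMono_nat_of_lt_succ fun k => by
        show m (φ k) < m (φ (k + 1))
        rw [hφsucc]; exact (H (φ k)).choose_spec.2
    exact ⟨m ∘ φ, x' ∘ φ, hmφ, fun k => hx'U (φ k), hx'tend.comp hφ.tendsto_atTop⟩
end

section
/- Let G be a κ-Fréchet–Urysohn topological group and let {V_n : n ∈ ω}, where V_n = {V_n^i : i ∈ ω}, be countable families of open subsets of G such that each family V_n weakly converges to the identity e. Then there exist strictly increasing sequences (i_k) and (n_k) in ω and a sequence (x_k) such that x_k → e and x_k ∈ V_{n_k}^{i_k} for every k. -/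
open Filter Topology

/-- A family `{A n}_{n∈ω}` of subsets of `X` weakly converges to `x` if for every
neighborhood `W` of `x` there are a sequence `(a n)` with `a n ∈ A n` and an `m`
such that `a n ∈ W` for every `n > m`. -/
def WeaklyConverges {X : Type*} [TopologicalSpace X] (A : ℕ → Set X) (x : X) : Prop :=
  ∀ W ∈ 𝓝 x, ∃ (a : ℕ → X) (m : ℕ), (∀ n, a n ∈ A n) ∧ ∀ n > m, a n ∈ W

open Pointwise Set

/-- The "depth `m`" union of the double family. -/
private def Bset {G : Type*} (V : ℕ → ℕ → Set G) (m : ℕ) : Set G :=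
  ⋃ n, ⋃ i, ⋃ (_ : m ≤ n), ⋃ (_ : m ≤ i), V n i

private lemma mem_Bset {G : Type*} {V : ℕ → ℕ → Set G} {m : ℕ} {x : G} :
    x ∈ Bset V m ↔ ∃ n, m ≤ n ∧ ∃ i, m ≤ i ∧ x ∈ V n i := by
  simp only [Bset, Set.mem_iUnion]
  constructor
  · rintro ⟨n, i, hn, hi, hx⟩
    exact ⟨n, hn, i, hi, hx⟩
  · rintro ⟨n, hn, i, hi, hx⟩
    exact ⟨n, i, hn, hi, hx⟩

private lemma Bset_open {G : Type*} [TopologicalSpace G] (V : ℕ → ℕ → Set G)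
    (hopen : ∀ n i, IsOpen (V n i)) (m : ℕ) : IsOpen (Bset V m) :=
  isOpen_iUnion fun n => isOpen_iUnion fun i => isOpen_iUnion fun _ =>
    isOpen_iUnion fun _ => hopen n i

private lemma Bset_mono {G : Type*} (V : ℕ → ℕ → Set G) {s t : ℕ} (hts : t ≤ s) :
    Bset V s ⊆ Bset V t := by
  intro x hx
  obtain ⟨n, hn, i, hi, hVm⟩ := mem_Bset.1 hx
  exact mem_Bset.2 ⟨n, hts.trans hn, i, hts.trans hi, hVm⟩

/-- Final extraction: a sequence tending to `e` whose `t`-th member lies in some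
`V n i` with `n, i ≥ t` yields the desired strictly monotone data. -/
private lemma aux_win {G : Type*} [TopologicalSpace G] (V : ℕ → ℕ → Set G) (e : G) (b : ℕ → G)
    (hbt : Tendsto b atTop (𝓝 e))
    (hbm : ∀ t, ∃ n, t ≤ n ∧ ∃ i, t ≤ i ∧ b t ∈ V n i) :
    ∃ (ik nk : ℕ → ℕ) (x : ℕ → G), StrictMono ik ∧ StrictMono nk ∧
      Tendsto x atTop (𝓝 e) ∧ ∀ k, x k ∈ V (nk k) (ik k) := by
  choose n hn i hi hV using hbm
  let T : ℕ → ℕ := fun k =>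
    Nat.rec (motive := fun _ => ℕ) 0 (fun _ prev => max (n prev) (i prev) + 1) k
  have hT : ∀ k, T (k + 1) = max (n (T k)) (i (T k)) + 1 := fun k => rfl
  have hTs : StrictMono T := by
    apply strictMono_nat_of_lt_succ
    intro k
    rw [hT]
    exact lt_of_le_of_lt (hn (T k)) (lt_of_le_of_lt (le_max_left _ _) (Nat.lt_succ_self _))
  refine ⟨fun k => i (T k), fun k => n (T k), fun k => b (T k), ?_, ?_, ?_, fun k => hV (T k)⟩
  · apply strictMono_nat_of_lt_succ
    intro k
    calc i (T k) ≤ max (n (T k)) (i (T k)) := le_max_right _ _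
      _ < T (k + 1) := by rw [hT]; exact Nat.lt_succ_self _
      _ ≤ i (T (k + 1)) := hi _
  · apply strictMono_nat_of_lt_succ
    intro k
    calc n (T k) ≤ max (n (T k)) (i (T k)) := le_max_left _ _
      _ < T (k + 1) := by rw [hT]; exact Nat.lt_succ_self _
      _ ≤ n (T (k + 1)) := hn _
  · exact hbt.comp hTs.tendsto_atTop

/-- Forcing lemma: if each open piece `P k` does not have `e` in its closure, but
the union does, then a κ-FU sequence must pass through pieces of unbounded index. -/
private lemma aux_force {G : Type*} [TopologicalSpace G]
    (hkFU : KappaFrechetUrysohn G) (e : G) (P : ℕ → Set G)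
    (hPo : ∀ k, IsOpen (P k)) (hnc : ∀ k, e ∉ closure (P k))
    (hc : e ∈ closure (⋃ k, P k)) :
    ∃ (b : ℕ → G) (κ : ℕ → ℕ), StrictMono κ ∧ Tendsto b atTop (𝓝 e) ∧ ∀ t, b t ∈ P (κ t) := by
  obtain ⟨c, hcP, hct⟩ := hkFU _ (isOpen_iUnion hPo) e hc
  have hch : ∀ j, ∃ k, c j ∈ P k := fun j => Set.mem_iUnion.1 (hcP j)
  choose κ₀ hκ₀ using hch
  have hub : ∀ m n : ℕ, ∃ j, n ≤ j ∧ m ≤ κ₀ j := by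
    intro m n
    by_contra hcon
    push_neg at hcon
    have hpig : ∃ k, k < m ∧ {j : ℕ | n ≤ j ∧ κ₀ j = k}.Infinite := by
      by_contra h2
      push_neg at h2
      have hsub : Set.Ici n ⊆ ⋃ k ∈ Finset.range m, {j : ℕ | n ≤ j ∧ κ₀ j = k} := by
        intro j hj
        have hjn : n ≤ j := hj
        exact Set.mem_iUnion₂.2 ⟨κ₀ j, Finset.mem_range.2 (hcon j hjn), hjn, rfl⟩
      have hfin : (Set.Ici n).Finite :=
        (Set.Finite.biUnion (Finset.range m).finite_toSet
          (fun k hk => h2 k (Finset.mem_range.1 hk))).subset hsub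
      exact Set.Ici_infinite n hfin
    obtain ⟨k, _, hinf⟩ := hpig
    apply hnc k
    rw [mem_closure_iff]
    intro O hO heO
    obtain ⟨J, hJ⟩ := Filter.eventually_atTop.1 (hct (hO.mem_nhds heO))
    obtain ⟨j, hjS⟩ := (hinf.diff (Set.finite_Iio J)).nonempty
    have hjJ : J ≤ j := le_of_not_gt fun h => hjS.2 h
    have hjk : κ₀ j = k := hjS.1.2
    exact ⟨c j, hJ j hjJ, hjk ▸ hκ₀ j⟩
  choose f hf1 hf2 using hub
  let g : ℕ → ℕ := fun t =>
    Nat.rec (motive := fun _ => ℕ) (f 0 0) (fun _ prev => f (κ₀ prev + 1) (prev + 1)) t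
  have hg : ∀ t, g (t + 1) = f (κ₀ (g t) + 1) (g t + 1) := fun t => rfl
  have hgs : StrictMono g := by
    apply strictMono_nat_of_lt_succ
    intro t
    rw [hg]
    exact lt_of_lt_of_le (Nat.lt_succ_self _) (hf1 _ _)
  have hκs : StrictMono fun t => κ₀ (g t) := by
    apply strictMono_nat_of_lt_succ
    intro t
    calc κ₀ (g t) < κ₀ (g t) + 1 := Nat.lt_succ_self _
      _ ≤ κ₀ (g (t + 1)) := by rw [hg]; exact hf2 _ _
  exact ⟨fun t => c (g t), fun t => κ₀ (g t), hκs, hct.comp hgs.tendsto_atTop,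
    fun t => hκ₀ (g t)⟩

theorem stmt2 {G : Type*} [Group G] [TopologicalSpace G] [IsTopologicalGroup G]
    (hkFU : KappaFrechetUrysohn G)
    (V : ℕ → ℕ → Set G) (hopen : ∀ n i, IsOpen (V n i))
    (hw : ∀ n, WeaklyConverges (fun i => V n i) (1 : G)) :
    ∃ (ik nk : ℕ → ℕ) (x : ℕ → G), StrictMono ik ∧ StrictMono nk ∧
      Tendsto x atTop (𝓝 1) ∧ ∀ k, x k ∈ V (nk k) (ik k) := by
  classical
  have hBcl : ∀ m, (1 : G) ∈ closure (Bset V m) := by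
    intro m
    rw [mem_closure_iff]
    intro O hO h1O
    obtain ⟨a, m', haV, haW⟩ := hw m O (hO.mem_nhds h1O)
    refine ⟨a (max m (m' + 1)),
      haW _ (lt_of_lt_of_le (Nat.lt_succ_self m') (le_max_right _ _)), ?_⟩
    exact mem_Bset.2 ⟨m, le_refl m, max m (m' + 1), le_max_left _ _, haV _⟩
  have WINfin : ∀ b : ℕ → G, Tendsto b atTop (𝓝 (1 : G)) → (∀ t, b t ∈ Bset V t) →
      (∃ (ik nk : ℕ → ℕ) (x : ℕ → G), StrictMono ik ∧ StrictMono nk ∧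
        Tendsto x atTop (𝓝 (1 : G)) ∧ ∀ k, x k ∈ V (nk k) (ik k)) := by
    intro b hbt hbB
    exact aux_win V 1 b hbt fun t => mem_Bset.1 (hbB t)
  by_cases hN : ∀ M : ℕ, ∃ z : G, (∀ W ∈ 𝓝 (1 : G), z ∈ W) ∧ z ∈ Bset V M
  · -- the infinitesimal monad meets every depth: constant-like winning sequence
    choose z hz1 hz2 using hN
    refine WINfin z ?_ hz2
    rw [Filter.tendsto_def]
    intro s hs
    exact Filter.univ_mem' fun M => hz1 M s hs
  · push_neg at hN
    obtain ⟨M₀, hM₀⟩ := hN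
    -- non-P-point structure: closed neighborhoods with non-neighborhood intersection
    have hnonP : ∃ F : ℕ → Set G, (∀ k, F k ∈ 𝓝 (1 : G) ∧ IsClosed (F k)) ∧
        (⋂ k, F k) ∉ 𝓝 (1 : G) := by
      by_contra hP
      push_neg at hP
      obtain ⟨y, hyB, hyt⟩ := hkFU (Bset V M₀) (Bset_open V hopen M₀) 1 (hBcl M₀)
      have hyN : ∀ j, ∃ W ∈ 𝓝 (1 : G), y j ∉ W := by
        intro j
        by_contra hcon
        push_neg at hcon
        exact hM₀ (y j) hcon (hyB j)
      choose W hWn hyW using hyN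
      have hFex : ∀ j, ∃ F, (F ∈ 𝓝 (1 : G) ∧ IsClosed F) ∧ F ⊆ W j := fun j =>
        (closed_nhds_basis (1 : G)).mem_iff.1 (hWn j)
      choose F hF hFW using hFex
      have hin : (⋂ k, F k) ∈ 𝓝 (1 : G) := hP F hF
      have hev : ∀ᶠ j in atTop, y j ∈ ⋂ k, F k := hyt hin
      obtain ⟨j, hj⟩ := hev.exists
      exact hyW j (hFW j (Set.mem_iInter.1 hj j))
    obtain ⟨F, hF, hFn⟩ := hnonP
    by_cases hKn : (⋂ m, closure (Bset V m))⁻¹ ∈ 𝓝 (1 : G)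
    · -- "dense" case: K is a neighborhood of 1, shave with the F k
      have hKnb : (⋂ m, closure (Bset V m)) ∈ 𝓝 (1 : G) := by
        have h1 : (fun x : G => x⁻¹) ⁻¹' (⋂ m, closure (Bset V m))⁻¹ =
            (⋂ m, closure (Bset V m)) := by
          ext x; simp [Set.mem_inv]
        have hKn' : (⋂ m, closure (Bset V m))⁻¹ ∈ 𝓝 ((1 : G)⁻¹) := by
          rw [inv_one]; exact hKn
        have h3 := (continuous_inv.continuousAt (x := (1 : G))).preimage_mem_nhds hKn'
        rwa [h1] at h3
      have h1W : (1 : G) ∈ interior (⋂ m, closure (Bset V m)) :=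
        mem_interior_iff_mem_nhds.2 hKnb
      set Wst : Set G := interior (⋂ m, closure (Bset V m)) with hWst
      have hQo : ∀ k, IsOpen ((Bset V k ∩ Wst) \ F k) := fun k =>
        ((Bset_open V hopen k).inter isOpen_interior).sdiff (hF k).2
      have hQnc : ∀ k, (1 : G) ∉ closure ((Bset V k ∩ Wst) \ F k) := by
        intro k hcl
        have h2 : (1 : G) ∈ closure (F k)ᶜ := closure_mono (fun x hx => hx.2) hcl
        rw [closure_compl] at h2
        exact h2 (mem_interior_iff_mem_nhds.2 (hF k).1)
      have hQu : (1 : G) ∈ closure (⋃ k, (Bset V k ∩ Wst) \ F k) := by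
        rw [mem_closure_iff]
        intro O hO h1O
        by_contra hcon
        have hsub : O ∩ Wst ⊆ ⋂ k, F k := by
          intro w hwm
          rw [Set.mem_iInter]
          intro k
          by_contra hwF
          have hwK : w ∈ closure (Bset V k) :=
            Set.mem_iInter.1 (interior_subset hwm.2) k
          rw [mem_closure_iff] at hwK
          obtain ⟨y, ⟨⟨hyO, hyW⟩, hyF⟩, hyB⟩ :=
            hwK ((O ∩ Wst) \ F k) ((hO.inter isOpen_interior).sdiff (hF k).2) ⟨hwm, hwF⟩
          exact hcon ⟨y, hyO, Set.mem_iUnion.2 ⟨k, ⟨hyB, hyW⟩, hyF⟩⟩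
        exact hFn (Filter.mem_of_superset
          (Filter.inter_mem (hO.mem_nhds h1O) (isOpen_interior.mem_nhds h1W)) hsub)
      obtain ⟨b, κ, hκs, hbt, hbP⟩ := aux_force hkFU 1 _ hQo hQnc hQu
      refine WINfin b hbt ?_
      intro t
      exact Bset_mono V hκs.le_apply (hbP t).1.1
    · -- "escape" case: translators avoiding all deep closures exist
      have hKc : IsClosed (⋂ m, closure (Bset V m)) :=
        isClosed_iInter fun m => isClosed_closure
      have hKinvc : IsClosed (⋂ m, closure (Bset V m))⁻¹ := hKc.inv
      have h1c : (1 : G) ∈ closure ((⋂ m, closure (Bset V m))⁻¹)ᶜ := by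
        rw [mem_closure_iff]
        intro O hO h1O
        by_contra hcon
        apply hKn
        refine Filter.mem_of_superset (hO.mem_nhds h1O) ?_
        intro x hx
        by_contra hxK
        exact hcon ⟨x, hx, hxK⟩
      obtain ⟨u, huc, hut⟩ := hkFU _ hKinvc.isOpen_compl 1 h1c
      have hHm : ∀ j, ∃ m, (u j)⁻¹ ∉ closure (Bset V m) := by
        intro j
        have h2 : (u j)⁻¹ ∉ ⋂ m, closure (Bset V m) := by
          intro hmem
          exact huc j (Set.mem_inv.2 (by simpa using hmem))
        simp only [Set.mem_iInter] at h2
        push_neg at h2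
        exact h2
      choose h hh using hHm
      have hPo : ∀ j, IsOpen (u j • Bset V (max (h j) j)) := fun j =>
        (Bset_open V hopen _).smul _
      have hPnc : ∀ j, (1 : G) ∉ closure (u j • Bset V (max (h j) j)) := by
        intro j hcl
        rw [closure_smul, Set.mem_smul_set_iff_inv_smul_mem] at hcl
        have h2 : (u j)⁻¹ ∈ closure (Bset V (max (h j) j)) := by simpa using hcl
        exact hh j (closure_mono (Bset_mono V (le_max_left _ _)) h2)
      have hPu : (1 : G) ∈ closure (⋃ j, u j • Bset V (max (h j) j)) := by
        rw [mem_closure_iff]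
        intro O hO h1O
        obtain ⟨Vo, hVo, h1V, hVV⟩ := exists_open_nhds_one_mul_subset (hO.mem_nhds h1O)
        have hev : ∀ᶠ j in atTop, u j ∈ Vo := hut (hVo.mem_nhds h1V)
        obtain ⟨j, hj⟩ := hev.exists
        have hB' := hBcl (max (h j) j)
        rw [mem_closure_iff] at hB'
        obtain ⟨zz, hzV, hzB⟩ := hB' Vo hVo h1V
        refine ⟨u j * zz, hVV (Set.mul_mem_mul hj hzV), ?_⟩
        exact Set.mem_iUnion.2 ⟨j, ⟨zz, hzB, rfl⟩⟩
      obtain ⟨b, κ, hκs, hbt, hbP⟩ := aux_force hkFU 1 _ hPo hPnc hPu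
      refine WINfin (fun t => (u (κ t))⁻¹ * b t) ?_ ?_
      · have h1 : Tendsto (fun t => u (κ t)) atTop (𝓝 (1 : G)) :=
          hut.comp hκs.tendsto_atTop
        have h2 := h1.inv.mul hbt
        simpa using h2
      · intro t
        have h3 := hbP t
        rw [Set.mem_smul_set_iff_inv_smul_mem] at h3
        have h4 : (u (κ t))⁻¹ * b t ∈ Bset V (max (h (κ t)) (κ t)) := by simpa using h3
        exact Bset_mono V (hκs.le_apply.trans (le_max_right _ _)) h4
end

section
/- Every hemicompact κ-Fréchet–Urysohn topological group is locally compact. -/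
open Filter Topology

/-- A space is hemicompact if there is an increasing sequence of compact sets
such that every compact subset is contained in one of them. -/
def Hemicompact (X : Type*) [TopologicalSpace X] : Prop :=
  ∃ K : ℕ → Set X, (∀ n, IsCompact (K n)) ∧ Monotone K ∧
    ∀ S : Set X, IsCompact S → ∃ n, S ⊆ K n

theorem stmt3 {G : Type*} [Group G] [TopologicalSpace G] [IsTopologicalGroup G] [T2Space G]
    (hhemi : Hemicompact G) (hkFU : KappaFrechetUrysohn G) :
    LocallyCompactSpace G := by
  obtain ⟨K, hKc, hKmono, hKabs⟩ := hhemi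
  by_cases hint : ∃ n, (interior (K n)).Nonempty
  · -- some K n has nonempty interior: G is locally compact
    obtain ⟨n, x, hx⟩ := hint
    exact (hKc n).locallyCompactSpace_of_mem_nhds_of_group
      (mem_interior_iff_mem_nhds.mp hx)
  · push_neg at hint
    exfalso
    have hdense : ∀ n, Dense ((K n)ᶜ) := by
      intro n
      rw [dense_iff_closure_eq, closure_compl, hint n, Set.compl_empty]
    -- a nontrivial sequence converging to 1
    obtain ⟨m, hm⟩ := hKabs {1} isCompact_singleton
    have h1K : (1 : G) ∈ K m := hm rfl
    obtain ⟨s, hsU, hs⟩ := hkFU ((K m)ᶜ) (hKc m).isClosed.isOpen_compl 1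
      ((hdense m).closure_eq ▸ Set.mem_univ 1)
    have hsne : ∀ k, s k ≠ 1 := fun k h => hsU k (by rw [h]; exact h1K)
    -- separating open sets around each s k avoiding 1 in closure
    have hV : ∀ k, ∃ V : Set G, IsOpen V ∧ s k ∈ V ∧ (1 : G) ∉ closure V := by
      intro k
      obtain ⟨V, W, hVo, hWo, hsV, h1W, hVW⟩ := t2_separation (hsne k)
      refine ⟨V, hVo, hsV, fun h => ?_⟩
      have hsub : closure V ⊆ Wᶜ :=
        closure_minimal hVW.subset_compl_right hWo.isClosed_compl
      exact hsub h h1W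
    choose V hVo hsV h1V using hV
    set U : Set G := ⋃ k, (K k)ᶜ ∩ V k with hU
    have hUo : IsOpen U := isOpen_iUnion fun k =>
      ((hKc k).isClosed.isOpen_compl).inter (hVo k)
    have h1cl : (1 : G) ∈ closure U := by
      rw [mem_closure_iff]
      intro O hOo h1O
      obtain ⟨k, hk⟩ := (hs.eventually_mem (hOo.mem_nhds h1O)).exists
      have hne : (O ∩ V k).Nonempty := ⟨s k, hk, hsV k⟩
      obtain ⟨x, hx1, hx2⟩ := (hdense k).inter_open_nonempty _ (hOo.inter (hVo k)) hne
      exact ⟨x, hx1.1, Set.mem_iUnion.mpr ⟨k, hx2, hx1.2⟩⟩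
    obtain ⟨y, hyU, hy⟩ := hkFU U hUo 1 h1cl
    obtain ⟨M, hM⟩ := hKabs _ hy.isCompact_insert_range
    have hev : ∀ᶠ j in atTop, ∀ k ∈ Set.Iic M, y j ∉ closure (V k) := by
      refine (Set.finite_Iic M).eventually_all.mpr fun k _ => ?_
      exact hy.eventually_mem (isClosed_closure.isOpen_compl.mem_nhds (h1V k))
    obtain ⟨j, hj⟩ := hev.exists
    obtain ⟨k, hk1, hk2⟩ := Set.mem_iUnion.mp (hyU j)
    have hkM : ¬ k ≤ M := fun h => hj k h (subset_closure hk2)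
    exact hk1 (hKmono (le_of_not_ge hkM) (hM (Set.mem_insert_of_mem _ ⟨j, rfl⟩)))
end

section
/- A hemicompact topological group is Baire if and only if it is locally compact. -/
theorem stmt4 {G : Type*} [Group G] [TopologicalSpace G] [IsTopologicalGroup G] [T2Space G]
    (hhemi : Hemicompact G) :
    BaireSpace G ↔ LocallyCompactSpace G := by
  obtain ⟨K, hKc, _hmono, hK⟩ := hhemi
  constructor
  · intro hB
    have hcover : (⋃ n, K n) = Set.univ := by
      apply Set.eq_univ_of_forall
      intro x
      obtain ⟨n, hn⟩ := hK {x} isCompact_singleton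
      exact Set.mem_iUnion.2 ⟨n, hn rfl⟩
    obtain ⟨n, x, hx⟩ := nonempty_interior_of_iUnion_of_closed
      (fun n => (hKc n).isClosed) hcover
    exact (hKc n).locallyCompactSpace_of_mem_nhds_of_group
      (mem_nhds_iff.2 ⟨interior (K n), interior_subset, isOpen_interior, hx⟩)
  · intro _
    infer_instance
end

section
/- Let E be a topological vector space (over ℝ), F a closed subspace of E that is metrizable in the subspace topology, and suppose the quotient space E/F is κ-Fréchet–Urysohn. Then E is κ-Fréchet–Urysohn. -/
open Filter Topology

/-- From a neighborhood of `0`, extract an open symmetric neighborhood `V` with `V + V`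
inside it. -/
lemma aux_sym_half {E : Type*} [AddCommGroup E] [TopologicalSpace E] [IsTopologicalAddGroup E]
    {N : Set E} (hN : N ∈ 𝓝 (0 : E)) :
    ∃ V : Set E, IsOpen V ∧ (0 : E) ∈ V ∧ (∀ x ∈ V, -x ∈ V) ∧
      ∀ a ∈ V, ∀ b ∈ V, a + b ∈ N := by
  obtain ⟨V, hVo, hV0, hVh⟩ := exists_open_nhds_zero_half hN
  refine ⟨V ∩ (-V), hVo.inter hVo.neg, ⟨hV0, by simpa using hV0⟩, ?_, ?_⟩
  · rintro x ⟨h1, h2⟩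
    exact ⟨by simpa using h2, by simpa using h1⟩
  · rintro a ⟨ha, -⟩ b ⟨hb, -⟩
    exact hVh a ha b hb

/-- A decreasing chain of symmetric open neighborhoods of `0` with `O (k+1) + O (k+1) ⊆ O k`
and `O (k+1) ⊆ G (k+1)` for a prescribed sequence of neighborhoods `G`. -/
lemma aux_chain {E : Type*} [AddCommGroup E] [TopologicalSpace E] [IsTopologicalAddGroup E]
    (G : ℕ → Set E) (hG : ∀ k, G k ∈ 𝓝 (0 : E)) :
    ∃ O : ℕ → Set E, (∀ k, IsOpen (O k)) ∧ (∀ k, (0 : E) ∈ O k) ∧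
      (∀ k, ∀ x ∈ O k, -x ∈ O k) ∧
      (∀ k, ∀ a ∈ O (k + 1), ∀ b ∈ O (k + 1), a + b ∈ O k) ∧
      (∀ k, O (k + 1) ⊆ G (k + 1)) := by
  have step : ∀ N : Set E, N ∈ 𝓝 (0 : E) → ∃ V : Set E, IsOpen V ∧ (0 : E) ∈ V ∧
      (∀ x ∈ V, -x ∈ V) ∧ ∀ a ∈ V, ∀ b ∈ V, a + b ∈ N := fun N hN => aux_sym_half hN
  choose st h1 h2 h3 h4 using step
  let O : ℕ → {V : Set E // IsOpen V ∧ (0 : E) ∈ V} := fun n =>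
    Nat.rec ⟨st (G 0) (hG 0), h1 _ _, h2 _ _⟩
      (fun k p => ⟨st (p.1 ∩ G (k + 1))
        (Filter.inter_mem (p.2.1.mem_nhds p.2.2) (hG (k + 1))), h1 _ _, h2 _ _⟩) n
  have hNmem : ∀ k, ((O k).1 ∩ G (k + 1)) ∈ 𝓝 (0 : E) := fun k =>
    Filter.inter_mem ((O k).2.1.mem_nhds (O k).2.2) (hG (k + 1))
  have key : ∀ k x, x ∈ (O (k + 1) : Set E) ↔ x ∈ st _ (hNmem k) := fun k x => Iff.rfl
  refine ⟨fun n => (O n).1, fun n => (O n).2.1, fun n => (O n).2.2, ?_, ?_, ?_⟩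
  · intro k x hx
    cases k with
    | zero => exact h3 _ _ x hx
    | succ k => exact (key k (-x)).2 (h3 _ _ x ((key k x).1 hx))
  · intro k a ha b hb
    exact (h4 _ _ a ((key k a).1 ha) b ((key k b).1 hb)).1
  · intro k y hy
    have := h4 _ _ y ((key k y).1 hy) 0 (h2 _ _)
    simpa using this.2

theorem stmt8 {E : Type*} [AddCommGroup E] [Module ℝ E] [TopologicalSpace E]
    [IsTopologicalAddGroup E] [ContinuousSMul ℝ E]
    (F : Submodule ℝ E) (hFclosed : IsClosed (F : Set E))
    [TopologicalSpace.MetrizableSpace F]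
    (hquot : KappaFrechetUrysohn (E ⧸ F)) :
    KappaFrechetUrysohn E := by
  haveI : IsClosed (F : Set E) := hFclosed
  intro U hU x hx
  -- translate `x` to `0`
  set U₀ : Set E := (Homeomorph.subRight x) '' U with hU₀def
  have hU₀o : IsOpen U₀ := (Homeomorph.subRight x).isOpenMap U hU
  have hU₀c : (0 : E) ∈ closure U₀ := by
    rw [hU₀def, ← (Homeomorph.subRight x).image_closure]
    exact ⟨x, hx, by simp⟩
  suffices h : ∃ e : ℕ → E, (∀ n, e n ∈ U₀) ∧ Tendsto e atTop (𝓝 0) by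
    obtain ⟨e, he, het⟩ := h
    refine ⟨fun n => x + e n, fun n => ?_, ?_⟩
    · obtain ⟨u, hu, hue⟩ := he n
      have : x + e n = u := by
        rw [← hue, Homeomorph.subRight_apply]; abel
      show x + e n ∈ U
      rwa [this]
    · have : Tendsto (fun n => x + e n) atTop (𝓝 (x + 0)) := het.const_add x
      simpa using this
  clear hx hU hU₀def
  -- quotient map facts
  set pm : E → E ⧸ F := Submodule.Quotient.mk with hpmdef
  have hpc : Continuous pm := continuous_quot_mk
  have hpo : IsOpenMap pm := F.isOpenMap_mkQ
  have hp0 : pm 0 = 0 := rfl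
  -- countable decreasing base of neighborhoods of 0 in F, seen through open sets of E
  obtain ⟨t, ht⟩ := (𝓝 (0 : F)).exists_antitone_basis
  have hGex : ∀ j : ℕ, ∃ Gj : Set E, IsOpen Gj ∧ (0 : E) ∈ Gj ∧
      ∀ f : F, (f : E) ∈ Gj → f ∈ t j := by
    intro j
    have h1 : t j ∈ 𝓝 (0 : F) := ht.1.mem_of_mem trivial
    rw [mem_nhds_subtype] at h1
    obtain ⟨T, hT, hsub⟩ := h1
    rw [ZeroMemClass.coe_zero] at hT
    exact ⟨interior T, isOpen_interior, mem_interior_iff_mem_nhds.2 hT,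
      fun f hf => hsub (show (f : E) ∈ T from interior_subset hf)⟩
  choose G hGo hG0 hGt using hGex
  obtain ⟨O, hOo, hO0, hOsym, hOsum, hOG⟩ :=
    aux_chain G (fun k => (hGo k).mem_nhds (hG0 k))
  have hOanti : Antitone O := antitone_nat_of_succ_le (fun k y hy => by
    simpa using hOsum k y hy 0 (hO0 (k + 1)))
  have hbase : ∀ W ∈ 𝓝 (0 : E), ∃ m, ∀ f : E, f ∈ F → f ∈ O m → f ∈ W := by
    intro W hW
    have hWF : (Subtype.val ⁻¹' W : Set F) ∈ 𝓝 (0 : F) := by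
      apply continuous_subtype_val.continuousAt.preimage_mem_nhds
      rwa [ZeroMemClass.coe_zero]
    obtain ⟨j, -, hj⟩ := ht.1.mem_iff.1 hWF
    refine ⟨j + 1, fun f hfF hfO => ?_⟩
    have h1 : (⟨f, hfF⟩ : F) ∈ t (j + 1) := hGt (j + 1) ⟨f, hfF⟩ (hOG j hfO)
    have h2 : (⟨f, hfF⟩ : F) ∈ t j := ht.2 (Nat.le_succ j) h1
    exact hj h2
  -- `0` is in the closure of `U₀ ∩ O k`, hence of its image in the quotient
  have hcap : ∀ k, (0 : E) ∈ closure (U₀ ∩ O k) := by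
    intro k
    rw [mem_closure_iff] at hU₀c ⊢
    intro N hNo hN0
    obtain ⟨y, ⟨hy1, hy2⟩, hy3⟩ := hU₀c (N ∩ O k) (hNo.inter (hOo k)) ⟨hN0, hO0 k⟩
    exact ⟨y, hy1, hy3, hy2⟩
  have hΛc : ∀ k, (0 : E ⧸ F) ∈ closure (pm '' (U₀ ∩ O k)) := by
    intro k
    have h1 : pm 0 ∈ pm '' closure (U₀ ∩ O k) := ⟨0, hcap k, rfl⟩
    have h2 := image_closure_subset_closure_image (f := pm) (s := U₀ ∩ O k) hpc
    rw [hp0] at h1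
    exact h2 h1
  by_cases hA : ∀ k, (0 : E ⧸ F) ∈ pm '' (U₀ ∩ O k)
  · -- degenerate case: lift the zero of the quotient at every level
    choose c hc hc0 using hA
    refine ⟨c, fun k => (hc k).1, ?_⟩
    rw [Filter.tendsto_def]
    intro W hW
    obtain ⟨m, hm⟩ := hbase W hW
    have hcF : ∀ k, c k ∈ F := fun k => (Submodule.Quotient.mk_eq_zero F).1 (hc0 k)
    exact mem_atTop_sets.2 ⟨m, fun k hk =>
      hm (c k) (hcF k) (hOanti hk (hc k).2)⟩
  · push_neg at hA
    obtain ⟨k₁, hk₁⟩ := hA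
    -- reindexed chain
    set Q : ℕ → Set E := fun k => O (k₁ + k) with hQdef
    have hQo : ∀ k, IsOpen (Q k) := fun k => hOo _
    have hQ0 : ∀ k, (0 : E) ∈ Q k := fun k => hO0 _
    have hQsym : ∀ k, ∀ y ∈ Q k, -y ∈ Q k := fun k => hOsym _
    have hQsum : ∀ k, ∀ a ∈ Q (k + 1), ∀ b ∈ Q (k + 1), a + b ∈ Q k := fun k => hOsum (k₁ + k)
    have hQanti : Antitone Q := fun a b hab => hOanti (by omega)
    have hQbase : ∀ W ∈ 𝓝 (0 : E), ∃ m, ∀ f : E, f ∈ F → f ∈ Q m → f ∈ W := by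
      intro W hW
      obtain ⟨m, hm⟩ := hbase W hW
      exact ⟨m, fun f hfF hfQ => hm f hfF (hOanti (by omega) hfQ)⟩
    set Λ : ℕ → Set (E ⧸ F) := fun k => pm '' (U₀ ∩ Q k) with hΛdef
    have hΛo : ∀ k, IsOpen (Λ k) := fun k => hpo _ (hU₀o.inter (hQo k))
    have hΛcl : ∀ k, (0 : E ⧸ F) ∈ closure (Λ k) := fun k => hΛc (k₁ + k)
    have hΛnot : ∀ k, (0 : E ⧸ F) ∉ Λ k := by
      intro k h0
      exact hk₁ (Set.image_mono
        (Set.inter_subset_inter_right U₀ (hOanti (by omega : k₁ ≤ k₁ + k))) h0)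
    -- first κ-FU application
    obtain ⟨s, hsmem, hst⟩ := hquot (Λ 0) (hΛo 0) 0 (hΛcl 0)
    -- separate `-(s k)` from `0`
    have hsep : ∀ k, ∃ M : Set (E ⧸ F), IsOpen M ∧ (0 : E ⧸ F) ∈ M ∧
        -(s k) ∉ closure M := by
      intro k
      have hsk : -(s k) ≠ 0 := by
        simp only [ne_eq, neg_eq_zero]
        intro h
        exact hΛnot 0 (h ▸ hsmem k)
      obtain ⟨v, u, hvo, huo, hv, hu, hvu⟩ := t2_separation hsk
      refine ⟨u, huo, hu, fun hcl => ?_⟩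
      rw [mem_closure_iff] at hcl
      obtain ⟨y, hyv, hyu⟩ := hcl v hvo hv
      exact Set.disjoint_left.1 hvu hyv hyu
    choose M hMo hM0 hMns using hsep
    -- the translated union
    set Θ : ℕ → Set (E ⧸ F) := fun k => (Homeomorph.addLeft (s k)) '' (Λ (k + 1) ∩ M k)
      with hΘdef
    have hΛMcl : ∀ k, (0 : E ⧸ F) ∈ closure (Λ (k + 1) ∩ M k) := by
      intro k
      rw [mem_closure_iff]
      intro N hNo hN0
      have h1 := (mem_closure_iff.1 (hΛcl (k + 1))) (N ∩ M k)
        (hNo.inter (hMo k)) ⟨hN0, hM0 k⟩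
      obtain ⟨y, ⟨hy1, hy2⟩, hy3⟩ := h1
      exact ⟨y, hy1, hy3, hy2⟩
    have hΓo : IsOpen (⋃ k, Θ k) :=
      isOpen_iUnion fun k => (Homeomorph.addLeft (s k)).isOpenMap _
        ((hΛo (k + 1)).inter (hMo k))
    have hΓc : (0 : E ⧸ F) ∈ closure (⋃ k, Θ k) := by
      rw [mem_closure_iff]
      intro N hNo hN0
      obtain ⟨k, hk⟩ : ∃ k, s k ∈ N := (hst.eventually (hNo.mem_nhds hN0)).exists
      have h1 : s k ∈ closure (Θ k) := by
        rw [hΘdef]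
        rw [← (Homeomorph.addLeft (s k)).image_closure]
        exact ⟨0, hΛMcl k, by simp⟩
      obtain ⟨y, hy1, hy2⟩ := mem_closure_iff.1 h1 N hNo hk
      exact ⟨y, hy1, Set.mem_iUnion.2 ⟨k, hy2⟩⟩
    -- second κ-FU application
    obtain ⟨z, hz, hzt⟩ := hquot (⋃ k, Θ k) hΓo 0 hΓc
    have hz' : ∀ j, ∃ k, z j ∈ Θ k := fun j => Set.mem_iUnion.1 (hz j)
    choose κ hκmem using hz'
    -- the levels tend to infinity
    have hkinf : Tendsto κ atTop atTop := by
      by_contra hcon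
      rw [tendsto_atTop_atTop] at hcon
      push_neg at hcon
      obtain ⟨b, hb⟩ := hcon
      have hfreq : ∃ᶠ j in atTop, κ j < b := by
        rw [frequently_atTop]
        intro a
        obtain ⟨n, hn1, hn2⟩ := hb a
        exact ⟨n, hn1, hn2⟩
      have hex : ∃ k, ∃ᶠ j in atTop, κ j = k := by
        by_contra hno
        push_neg at hno
        have hev : ∀ᶠ j in atTop, ∀ k ∈ Finset.range b, κ j ≠ k := by
          rw [eventually_all_finset]
          intro k _
          exact hno k
        obtain ⟨j, hj1, hj2⟩ := (hfreq.and_eventually hev).exists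
        exact hj2 (κ j) (Finset.mem_range.2 hj1) rfl
      obtain ⟨k', hk'⟩ := hex
      have hfz : ∃ᶠ j in atTop, z j ∈ Θ k' :=
        hk'.mono fun j hj => hj ▸ hκmem j
      have h0 : (0 : E ⧸ F) ∈ closure (Θ k') :=
        mem_closure_of_frequently_of_tendsto hfz hzt
      rw [hΘdef] at h0
      rw [← (Homeomorph.addLeft (s k')).image_closure] at h0
      obtain ⟨a, ha, ha2⟩ := h0
      have ha3 : s k' + a = 0 := ha2
      have : a = -(s k') := by
        rw [eq_neg_of_add_eq_zero_right ha3]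
      rw [this] at ha
      exact hMns k' (closure_mono Set.inter_subset_right ha)
    -- unpack the sequence
    have hzmem : ∀ j, ∃ a, a ∈ Λ (κ j + 1) ∩ M (κ j) ∧ s (κ j) + a = z j := by
      intro j
      obtain ⟨a, ha, ha2⟩ := hκmem j
      exact ⟨a, ha, ha2⟩
    choose a hamem haeq using hzmem
    have haz : ∀ j, a j = z j - s (κ j) := fun j => by
      rw [← haeq j]; abel
    have hat : Tendsto a atTop (𝓝 0) := by
      have h1 : Tendsto (fun j => z j - s (κ j)) atTop (𝓝 (0 - 0)) :=
        hzt.sub (hst.comp hkinf)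
      rw [sub_zero] at h1
      exact h1.congr fun j => (haz j).symm
    -- lift
    have hlift : ∀ j, ∃ e, e ∈ U₀ ∩ Q (κ j + 1) ∧ pm e = a j := by
      intro j
      obtain ⟨e, he, he2⟩ := (hamem j).1
      exact ⟨e, he, he2⟩
    choose e he hpe using hlift
    refine ⟨e, fun j => (he j).1, ?_⟩
    rw [Filter.tendsto_def]
    intro W hW
    obtain ⟨V, hVo, hV0, hVsym, hVhalf⟩ := aux_sym_half hW
    obtain ⟨m, hm⟩ := hQbase V ((hVo).mem_nhds hV0)
    have hM' : pm '' (V ∩ Q (m + 1)) ∈ 𝓝 (0 : E ⧸ F) :=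
      (hpo _ (hVo.inter (hQo (m + 1)))).mem_nhds ⟨0, ⟨hV0, hQ0 (m + 1)⟩, hp0⟩
    have h1 : ∀ᶠ j in atTop, a j ∈ pm '' (V ∩ Q (m + 1)) := hat.eventually_mem hM'
    have h2 : ∀ᶠ j in atTop, m + 1 ≤ κ j + 1 := by
      have := hkinf.eventually_ge_atTop m
      filter_upwards [this] with j hj
      omega
    have h3 : ∀ᶠ j in atTop, e j ∈ W := by
      filter_upwards [h1, h2] with j hj1 hj2
      obtain ⟨w, ⟨hwV, hwQ⟩, hwp⟩ := hj1
      have hfF : e j - w ∈ F := by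
        apply (Submodule.Quotient.eq F).1
        show pm (e j) = pm w
        rw [hpe j, hwp]
      have heQ : e j ∈ Q (m + 1) := hQanti hj2 (he j).2
      have hfQ : e j - w ∈ Q m := by
        have hnw : -w ∈ Q (m + 1) := hQsym (m + 1) w hwQ
        have := hQsum m (e j) heQ (-w) hnw
        simpa [sub_eq_add_neg] using this
      have hfV : e j - w ∈ V := hm _ hfF hfQ
      have := hVhalf w hwV _ hfV
      simpa using this
    exact h3
end

section
/- If E is a κ-Fréchet–Urysohn topological vector space and F is a metrizable topological vector space, then the product E × F is a κ-Fréchet–Urysohn space. -/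
open Filter Topology

/-- Key lemma (inner version): in a κ-Fréchet–Urysohn topological additive group,
given a sequence of open sets each accumulating at `0` but none containing `0`,
one can find a sequence converging to `0` whose members lie in sets of
arbitrarily large index. -/
theorem kfu_diag_aux {E : Type*} [AddCommGroup E] [TopologicalSpace E]
    [IsTopologicalAddGroup E] (hE : KappaFrechetUrysohn E)
    (A : ℕ → Set E) (hopen : ∀ j, IsOpen (A j))
    (hcl : ∀ j, (0 : E) ∈ closure (A j)) (h0 : ∀ j, (0 : E) ∉ A j) :
    ∃ (a : ℕ → E) (n : ℕ → ℕ), (∀ m, a m ∈ A (n m)) ∧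
      Tendsto n atTop atTop ∧ Tendsto a atTop (𝓝 0) := by
  classical
  -- sequences in each A j converging to 0
  choose u hu1 hu2 using fun j => hE (A j) (hopen j) 0 (hcl j)
  -- b j := -(u 0 j) is separated from 0
  set b : ℕ → E := fun j => -(u 0 j) with hb_def
  have hbncl : ∀ j, (0 : E) ∉ closure ({b j} : Set E) := by
    intro j h
    rw [mem_closure_iff] at h
    have hW : IsOpen {z : E | z + u 0 j ∈ A 0} :=
      (hopen 0).preimage (continuous_id.add continuous_const)
    have h0W : (0 : E) ∈ {z : E | z + u 0 j ∈ A 0} := by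
      simpa using hu1 0 j
    obtain ⟨w, hw1, hw2⟩ := h _ hW h0W
    rw [Set.mem_singleton_iff] at hw2
    subst hw2
    have : (0 : E) ∈ A 0 := by simpa [hb_def] using hw1
    exact h0 0 this
  -- choose closed neighborhoods t j of 0 avoiding b j
  have hreg : ∀ j, ∃ t : Set E, t ∈ 𝓝 (0 : E) ∧ IsClosed t ∧ b j ∉ t := by
    intro j
    have hco : (closure ({b j} : Set E))ᶜ ∈ 𝓝 (0 : E) :=
      (isClosed_closure.isOpen_compl).mem_nhds (hbncl j)
    obtain ⟨t, ht1, ht2, ht3⟩ := exists_mem_nhds_isClosed_subset hco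
    exact ⟨t, ht1, ht2, fun hbt => (ht3 hbt) (subset_closure rfl)⟩
  choose t ht_nhds ht_closed ht_avoid using hreg
  -- the union of translated pieces
  set S : Set E := ⋃ j, (fun z => z - u 0 j) ⁻¹' (A j ∩ interior (t j)) with hS_def
  have hS_open : IsOpen S := by
    refine isOpen_iUnion fun j => ?_
    exact ((hopen j).inter isOpen_interior).preimage (continuous_id.sub continuous_const)
  have hS_cl : (0 : E) ∈ closure S := by
    rw [mem_closure_iff]
    intro O hO hO0
    obtain ⟨V, hVopen, hV0, hVV⟩ := exists_open_nhds_zero_add_subset (hO.mem_nhds hO0)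
    obtain ⟨j, hj⟩ := ((hu2 0).eventually_mem (hVopen.mem_nhds hV0)).exists
    have hev : ∀ᶠ k in atTop, u j k ∈ V ∧ u j k ∈ interior (t j) := by
      filter_upwards [(hu2 j).eventually_mem (hVopen.mem_nhds hV0),
        (hu2 j).eventually_mem (interior_mem_nhds.mpr (ht_nhds j))] with k h1 h2
      exact ⟨h1, h2⟩
    obtain ⟨k, hkV, hkt⟩ := hev.exists
    refine ⟨u 0 j + u j k, hVV (Set.add_mem_add hj hkV), ?_⟩
    refine Set.mem_iUnion.mpr ⟨j, ?_⟩
    simp only [Set.mem_preimage, add_sub_cancel_left]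
    exact ⟨hu1 j k, hkt⟩
  -- apply κ-FU to S
  obtain ⟨s, hs1, hs2⟩ := hE S hS_open 0 hS_cl
  have hmem : ∀ i, ∃ j, s i - u 0 j ∈ A j ∩ interior (t j) := by
    intro i
    exact Set.mem_iUnion.mp (hs1 i)
  choose n hn using hmem
  -- the labels tend to infinity
  have hntop : Tendsto n atTop atTop := by
    rw [tendsto_atTop]
    intro J
    have hNj : ∀ j : ℕ, {z : E | z - u 0 j ∈ (t j)ᶜ} ∈ 𝓝 (0 : E) := by
      intro j
      refine ((ht_closed j).isOpen_compl.preimage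
        (continuous_id.sub continuous_const)).mem_nhds ?_
      simpa [hb_def, zero_sub] using ht_avoid j
    have hevent : ∀ᶠ i in atTop, ∀ j ∈ Finset.range J, s i - u 0 j ∈ (t j)ᶜ := by
      rw [Filter.eventually_all_finset]
      intro j _
      exact hs2.eventually_mem (hNj j)
    filter_upwards [hevent] with i hi
    by_contra hlt
    push_neg at hlt
    have hj : n i ∈ Finset.range J := Finset.mem_range.mpr hlt
    exact (hi (n i) hj) (interior_subset (hn i).2)
  refine ⟨fun i => s i - u 0 (n i), n, fun i => (hn i).1, hntop, ?_⟩
  have h1 : Tendsto (fun i => u 0 (n i)) atTop (𝓝 0) := (hu2 0).comp hntop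
  simpa using hs2.sub h1

/-- Key lemma: in a κ-Fréchet–Urysohn topological additive group, given a
decreasing sequence of open sets each accumulating at `0`, one can find a
sequence converging to `0` whose members lie in sets of arbitrarily large
index. -/
theorem kfu_diag {E : Type*} [AddCommGroup E] [TopologicalSpace E]
    [IsTopologicalAddGroup E] (hE : KappaFrechetUrysohn E)
    (A : ℕ → Set E) (hopen : ∀ j, IsOpen (A j))
    (hdec : ∀ j k, j ≤ k → A k ⊆ A j)
    (hcl : ∀ j, (0 : E) ∈ closure (A j)) :
    ∃ (a : ℕ → E) (n : ℕ → ℕ), (∀ m, a m ∈ A (n m)) ∧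
      Tendsto n atTop atTop ∧ Tendsto a atTop (𝓝 0) := by
  classical
  by_cases h : ∀ j, (0 : E) ∈ A j
  · exact ⟨fun _ => 0, id, fun m => h m, tendsto_id, tendsto_const_nhds⟩
  · push_neg at h
    obtain ⟨j₀, hj₀⟩ := h
    have h0' : ∀ j, (0 : E) ∉ A (j + j₀) := by
      intro j hmem
      exact hj₀ (hdec j₀ (j + j₀) (Nat.le_add_left _ _) hmem)
    obtain ⟨a, n, ha, hn, ha0⟩ := kfu_diag_aux hE (fun j => A (j + j₀))
      (fun j => hopen _) (fun j => hcl _) h0'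
    refine ⟨a, fun m => n m + j₀, fun m => ha m, ?_, ha0⟩
    exact tendsto_atTop_mono (fun m => Nat.le_add_right (n m) j₀) hn

theorem stmt9 {E F : Type*}
    [AddCommGroup E] [Module ℝ E] [TopologicalSpace E] [IsTopologicalAddGroup E]
    [ContinuousSMul ℝ E]
    [AddCommGroup F] [Module ℝ F] [TopologicalSpace F] [IsTopologicalAddGroup F]
    [ContinuousSMul ℝ F] [TopologicalSpace.MetrizableSpace F]
    (hE : KappaFrechetUrysohn E) :
    KappaFrechetUrysohn (E × F) := by
  classical
  letI : MetricSpace F := TopologicalSpace.metrizableSpaceMetric F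
  intro U hU p hp
  -- translate so that the distinguished point is 0
  set U' : Set (E × F) := (fun z : E × F => z + p) ⁻¹' U with hU'_def
  have hU'open : IsOpen U' := hU.preimage (continuous_id.add continuous_const)
  have hU'cl : (0 : E × F) ∈ closure U' := by
    have h1 : U' = (Homeomorph.addRight p) ⁻¹' U := rfl
    have h2 := (Homeomorph.addRight p).preimage_closure U
    have : (0 : E × F) ∈ (Homeomorph.addRight p) ⁻¹' (closure U) := by
      simpa [Homeomorph.addRight] using hp
    rw [h2] at this
    rwa [h1]
  -- slices of U' by metric balls in F
  set A : ℕ → Set E := fun j =>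
    {e : E | ∃ f : F, dist f 0 < 1 / ((j : ℝ) + 1) ∧ (e, f) ∈ U'} with hA_def
  have hAopen : ∀ j, IsOpen (A j) := by
    intro j
    rw [isOpen_iff_mem_nhds]
    rintro e ⟨f, hf, hef⟩
    have hmem : U' ∈ 𝓝 (e, f) := hU'open.mem_nhds hef
    rw [nhds_prod_eq, Filter.mem_prod_iff] at hmem
    obtain ⟨P, hP, Q, hQ, hPQ⟩ := hmem
    refine Filter.mem_of_superset hP fun e' he' => ?_
    exact ⟨f, hf, hPQ ⟨he', mem_of_mem_nhds hQ⟩⟩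
  have hAdec : ∀ j k, j ≤ k → A k ⊆ A j := by
    rintro j k hjk e ⟨f, hf, hef⟩
    refine ⟨f, lt_of_lt_of_le hf ?_, hef⟩
    apply one_div_le_one_div_of_le
    · positivity
    · have : (j : ℝ) ≤ (k : ℝ) := Nat.cast_le.mpr hjk
      linarith
  have hAcl : ∀ j, (0 : E) ∈ closure (A j) := by
    intro j
    rw [mem_closure_iff]
    intro O hO hO0
    have hball : (0 : ℝ) < 1 / ((j : ℝ) + 1) := by positivity
    have hW : IsOpen (O ×ˢ Metric.ball (0 : F) (1 / ((j : ℝ) + 1))) :=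
      hO.prod Metric.isOpen_ball
    have hW0 : ((0 : E), (0 : F)) ∈ O ×ˢ Metric.ball (0 : F) (1 / ((j : ℝ) + 1)) :=
      ⟨hO0, Metric.mem_ball_self hball⟩
    rw [mem_closure_iff] at hU'cl
    obtain ⟨z, ⟨hz1, hz2⟩, hz3⟩ := hU'cl _ hW hW0
    exact ⟨z.1, hz1, ⟨z.2, by simpa [Metric.mem_ball] using hz2, by simpa using hz3⟩⟩
  obtain ⟨a, n, ha, hn, ha0⟩ := kfu_diag hE A hAopen hAdec hAcl
  choose f hfd hfU using fun m => ha m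
  have hf0 : Tendsto f atTop (𝓝 (0 : F)) := by
    rw [tendsto_iff_dist_tendsto_zero]
    refine squeeze_zero (fun m => dist_nonneg) (fun m => (hfd m).le) ?_
    exact tendsto_one_div_add_atTop_nhds_zero_nat.comp hn
  refine ⟨fun m => (a m, f m) + p, fun m => hfU m, ?_⟩
  have h1 : Tendsto (fun m => ((a m, f m) : E × F)) atTop (𝓝 (0, 0)) :=
    ha0.prodMk_nhds hf0
  have h2 := h1.add_const p
  simpa [Prod.mk_zero_zero] using h2
end

section
/- Every zero-dimensional Lindelöf regular topological space is strongly zero-dimensional: for any two disjoint closed sets A and B, there exists a clopen set C with A ⊆ C and C ∩ B = ∅. -/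
def ZeroDimensional (X : Type*) [TopologicalSpace X] : Prop :=
  ∀ (x : X) (U : Set X), IsOpen U → x ∈ U → ∃ C : Set X, IsClopen C ∧ x ∈ C ∧ C ⊆ U

theorem stmt14 {X : Type*} [TopologicalSpace X] [LindelofSpace X] [RegularSpace X]
    (hzd : ZeroDimensional X)
    (A B : Set X) (hA : IsClosed A) (hB : IsClosed B) (hAB : Disjoint A B) :
    ∃ C : Set X, IsClopen C ∧ A ⊆ C ∧ C ∩ B = ∅ := by
  rcases isEmpty_or_nonempty X with hX | hX
  · exact ⟨∅, isClopen_empty, fun x hx => (IsEmpty.false x).elim, by simp⟩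
  -- For each point, choose a clopen neighborhood disjoint from A or from B
  have key : ∀ x : X, ∃ W : Set X, IsClopen W ∧ x ∈ W ∧ (W ∩ B = ∅ ∨ W ∩ A = ∅) := by
    intro x
    by_cases hxB : x ∈ B
    · have hxA : x ∉ A := fun hxA => hAB.ne_of_mem hxA hxB rfl
      obtain ⟨W, hW, hxW, hWs⟩ := hzd x Aᶜ hA.isOpen_compl hxA
      exact ⟨W, hW, hxW, Or.inr (Set.eq_empty_of_forall_notMem fun y ⟨hy1, hy2⟩ => hWs hy1 hy2)⟩
    · obtain ⟨W, hW, hxW, hWs⟩ := hzd x Bᶜ hB.isOpen_compl hxB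
      exact ⟨W, hW, hxW, Or.inl (Set.eq_empty_of_forall_notMem fun y ⟨hy1, hy2⟩ => hWs hy1 hy2)⟩
  choose W hWclopen hWmem hWdisj using key
  -- Extract countable subcover
  obtain ⟨f, hf⟩ := isLindelof_univ.indexed_countable_subcover W (fun x => (hWclopen x).2)
    (fun x _ => Set.mem_iUnion.mpr ⟨x, hWmem x⟩)
  set V : ℕ → Set X := fun n => W (f n) with hV
  have hVclopen : ∀ n, IsClopen (V n) := fun n => hWclopen (f n)
  -- Disjointify
  set D : ℕ → Set X := fun n => V n \ ⋃ m ∈ Finset.range n, V m with hD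
  have hDclopen : ∀ n, IsClopen (D n) :=
    fun n => (hVclopen n).diff (isClopen_biUnion_finset fun m _ => hVclopen m)
  have hDsub : ∀ n, D n ⊆ V n := fun n => Set.diff_subset
  have hDdisj : ∀ m n, m ≠ n → Disjoint (D m) (D n) := by
    intro m n hmn
    rcases lt_or_gt_of_ne hmn with h | h
    · exact Set.disjoint_left.mpr fun x hxm hxn =>
        hxn.2 (Set.mem_biUnion (Finset.mem_range.mpr h) hxm.1)
    · exact Set.disjoint_left.mpr fun x hxm hxn =>
        hxm.2 (Set.mem_biUnion (Finset.mem_range.mpr h) hxn.1)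
  have hDcover : ∀ x : X, ∃ n, x ∈ D n := by
    classical
    intro x
    have : x ∈ ⋃ n, V n := hf (Set.mem_univ x)
    obtain ⟨n, hn⟩ := Set.mem_iUnion.mp this
    have hex : ∃ n, x ∈ V n := ⟨n, hn⟩
    refine ⟨Nat.find hex, Nat.find_spec hex, fun hxk => ?_⟩
    obtain ⟨m, hm, hxm⟩ := Set.mem_iUnion₂.mp hxk
    exact Nat.find_min hex (Finset.mem_range.mp hm) hxm
  set S : Set ℕ := {n | V n ∩ B = ∅} with hS
  refine ⟨⋃ n ∈ S, D n, ⟨?_, isOpen_biUnion fun n _ => (hDclopen n).2⟩, ?_, ?_⟩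
  · -- closed: complement is union over Sᶜ
    have hcompl : (⋃ n ∈ S, D n)ᶜ = ⋃ n ∈ Sᶜ, D n := by
      ext x
      simp only [Set.mem_compl_iff, Set.mem_iUnion, not_exists]
      constructor
      · intro h
        obtain ⟨n, hn⟩ := hDcover x
        by_cases hnS : n ∈ S
        · exact absurd hn (h n hnS)
        · exact ⟨n, hnS, hn⟩
      · rintro ⟨n, hnS, hxn⟩ m hmS hxm
        rcases eq_or_ne m n with rfl | hne
        · exact hnS hmS
        · exact (hDdisj m n hne).ne_of_mem hxm hxn rfl
    rw [← isOpen_compl_iff, hcompl]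
    exact isOpen_biUnion fun n _ => (hDclopen n).2
  · -- A ⊆ C
    intro x hxA
    obtain ⟨n, hn⟩ := hDcover x
    have hnS : n ∈ S := by
      rcases hWdisj (f n) with h | h
      · exact h
      · exact absurd (Set.mem_inter (hDsub n hn) hxA) (by rw [h]; exact Set.notMem_empty x)
    exact Set.mem_biUnion hnS hn
  · -- C ∩ B = ∅
    apply Set.eq_empty_of_forall_notMem
    rintro x ⟨hxC, hxB⟩
    obtain ⟨n, hnS, hxn⟩ := Set.mem_iUnion₂.mp hxC
    have : x ∈ V n ∩ B := ⟨hDsub n hxn, hxB⟩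
    rw [hnS] at this
    exact this
end

section
/- Let G be a topological group and let H be a dense subgroup of G such that the coset decomposition G = H ∪ (g + H) holds for some g ∈ G \ H (so H has index 2), and suppose both H and g + H, with the subspace topologies, are Fréchet–Urysohn spaces. Then G is a κ-Fréchet–Urysohn space. -/
open Filter Topology

def FrechetUrysohn (X : Type*) [TopologicalSpace X] : Prop :=
  ∀ A : Set X, ∀ x ∈ closure A,
    ∃ u : ℕ → X, (∀ n, u n ∈ A) ∧ Tendsto u atTop (𝓝 x)

lemma aux15 {G : Type*} [TopologicalSpace G] (D : Set G) (hd : Dense D)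
    (hFU : FrechetUrysohn D) (U : Set G) (hU : IsOpen U) (x : G)
    (hx : x ∈ closure U) (hxD : x ∈ D) :
    ∃ u : ℕ → G, (∀ n, u n ∈ U) ∧ Tendsto u atTop (𝓝 x) := by
  have h1 : x ∈ closure (U ∩ D) :=
    closure_minimal (hd.open_subset_closure_inter hU) isClosed_closure hx
  have h2 : (⟨x, hxD⟩ : D) ∈ closure (Subtype.val ⁻¹' U : Set D) := by
    rw [closure_subtype]
    simpa [Subtype.image_preimage_coe, Set.inter_comm] using h1
  obtain ⟨u, hu, hconv⟩ := hFU _ _ h2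
  exact ⟨fun n => (u n : G), fun n => hu n,
    (continuous_subtype_val.tendsto _).comp hconv⟩

theorem stmt15 {G : Type*} [AddGroup G] [TopologicalSpace G] [IsTopologicalAddGroup G]
    (H : AddSubgroup G) (hdense : Dense (H : Set G)) (g : G) (hg : g ∉ H)
    (hcover : (Set.univ : Set G) = (H : Set G) ∪ {x | ∃ h ∈ H, x = g + h})
    (hH : FrechetUrysohn (H : Set G))
    (hgH : FrechetUrysohn ({x | ∃ h ∈ H, x = g + h} : Set G)) :
    KappaFrechetUrysohn G := by
  intro U hU x hx
  have hxmem : x ∈ (H : Set G) ∪ {x | ∃ h ∈ H, x = g + h} := by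
    rw [← hcover]; trivial
  have hSeq : {x | ∃ h ∈ H, x = g + h} = (fun y => g + y) '' (H : Set G) := by
    ext y
    constructor
    · rintro ⟨h, hh, rfl⟩; exact ⟨h, hh, rfl⟩
    · rintro ⟨h, hh, rfl⟩; exact ⟨h, hh, rfl⟩
  have hSdense : Dense ({x | ∃ h ∈ H, x = g + h} : Set G) := by
    rw [hSeq]
    exact ((Homeomorph.addLeft g).isDenseEmbedding.dense_image).mpr hdense
  rcases hxmem with hxH | hxS
  · exact aux15 _ hdense hH U hU x hx hxH
  · exact aux15 _ hSdense hgH U hU x hx hxS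
end
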